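/- Let d ≥ 1, let 0 ≤ δ < p − 1 and p > d/2, and set μ := (p − 1 − δ)/2. Define W_p : ℝ^d → ℝ by W_p(x) = p μ / (μ² + |x|²). Then ∫_{ℝ^d} W_p(x)^p dx = p^p π^{d/2} (2/(p − 1 − δ))^{p − d} Γ(p − d/2)/Γ(p). In particular, with δ such that δ = d − 1, one has lim_{p → d⁺} (∫_{ℝ^d} W_p^p dx)^{1/p} = d √π (Γ(d/2)/Γ(d))^{1/d}. -/

import Mathlib

open MeasureTheory Filter

open Real Set in
lemma realBeta (a b : ℝ) (ha : 0 < a) (hb : 0 < b) :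
    ∫ x in (0:ℝ)..1, x ^ (a-1) * (1-x) ^ (b-1)
      = Real.Gamma a * Real.Gamma b / Real.Gamma (a+b) := by
  have key := Complex.Gamma_mul_Gamma_eq_betaIntegral (s := (a:ℂ)) (t := (b:ℂ))
    (by simpa using ha) (by simpa using hb)
  have hint : Complex.betaIntegral (a:ℂ) (b:ℂ)
      = ((∫ x in (0:ℝ)..1, x ^ (a-1) * (1-x) ^ (b-1) : ℝ) : ℂ) := by
    rw [Complex.betaIntegral, ← intervalIntegral.integral_ofReal]
    apply intervalIntegral.integral_congr
    intro x hx
    rw [Set.uIcc_of_le (by norm_num : (0:ℝ) ≤ 1)] at hx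
    obtain ⟨hx0, hx1⟩ := hx
    have e1 : ((a:ℂ)-1) = ((a-1:ℝ):ℂ) := by push_cast; ring
    have e2 : ((b:ℂ)-1) = ((b-1:ℝ):ℂ) := by push_cast; ring
    have e3 : (1 - (x:ℂ)) = ((1-x:ℝ):ℂ) := by push_cast; ring
    simp only [e1, e2, e3, ← Complex.ofReal_cpow hx0,
      ← Complex.ofReal_cpow (show (0:ℝ) ≤ 1 - x by linarith), ← Complex.ofReal_mul]
  rw [hint, ← Complex.ofReal_add, Complex.Gamma_ofReal, Complex.Gamma_ofReal,
    Complex.Gamma_ofReal, ← Complex.ofReal_mul, ← Complex.ofReal_mul] at key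
  have h2 := Complex.ofReal_injective key
  have hG : Real.Gamma (a+b) ≠ 0 := (Real.Gamma_pos_of_pos (by linarith)).ne'
  field_simp
  linarith [h2]

open Real Set in
lemma IoiBeta (a b : ℝ) (ha : 0 < a) (hb : 0 < b) :
    ∫ t in Ioi (0:ℝ), t ^ (a-1) * (1+t) ^ (-(a+b))
      = Real.Gamma a * Real.Gamma b / Real.Gamma (a+b) := by
  set f : ℝ → ℝ := fun x => x / (1-x) with hf
  have himg : f '' Ioo 0 1 = Ioi (0:ℝ) := by
    ext y
    constructor
    · rintro ⟨x, ⟨hx0, hx1⟩, rfl⟩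
      exact div_pos hx0 (by linarith)
    · intro hy
      have hy0 := mem_Ioi.mp hy
      have h1 : (0:ℝ) < 1 + y := by linarith
      refine ⟨y / (1+y), ⟨div_pos hy0 h1, ?_⟩, ?_⟩
      · rw [div_lt_one h1]; linarith
      · have h2 : 1 - y / (1+y) = 1/(1+y) := by field_simp; ring
        simp only [hf, h2]
        rw [div_div_div_eq]
        field_simp
  have hder : ∀ x ∈ Ioo (0:ℝ) 1, HasDerivWithinAt f (((1-x)^2)⁻¹) (Ioo 0 1) x := by
    intro x ⟨hx0, hx1⟩
    have h1 : (1:ℝ) - x ≠ 0 := by linarith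
    have : HasDerivAt f ((1*(1-x) - x*(-1))/(1-x)^2) x :=
      (hasDerivAt_id x).div ((hasDerivAt_id x).const_sub 1) h1
    rw [show ((1-x)^2)⁻¹ = (1*(1-x) - x*(-1))/(1-x)^2 by ring]
    exact this.hasDerivWithinAt
  have hinj : InjOn f (Ioo 0 1) := by
    rintro x ⟨hx0, hx1⟩ y ⟨hy0, hy1⟩ hxy
    have h1 : (1:ℝ) - x ≠ 0 := by linarith
    have h2 : (1:ℝ) - y ≠ 0 := by linarith
    simp only [hf] at hxy; rw [div_eq_div_iff h1 h2] at hxy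
    nlinarith [hxy]
  have key := integral_image_eq_integral_abs_deriv_smul measurableSet_Ioo hder hinj
    (fun t => t ^ (a-1) * (1+t) ^ (-(a+b)))
  rw [himg] at key
  rw [key]
  have heq : ∀ x ∈ Ioo (0:ℝ) 1,
      |((1-x)^2)⁻¹| • (f x ^ (a-1) * (1 + f x) ^ (-(a+b)))
        = x ^ (a-1) * (1-x) ^ (b-1) := by
    intro x ⟨hx0, hx1⟩
    have h1 : (0:ℝ) < 1 - x := by linarith
    have hfx : 1 + f x = (1-x)⁻¹ := by simp only [hf]; field_simp; ring
    have e1 : f x ^ (a-1) = x ^ (a-1) * (1-x) ^ (-(a-1)) := by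
      rw [hf]
      simp only
      rw [Real.div_rpow hx0.le h1.le, div_eq_mul_inv, ← Real.rpow_neg h1.le]
    have e2 : (1 + f x) ^ (-(a+b)) = (1-x) ^ (a+b) := by
      rw [hfx, ← Real.rpow_neg_one, ← Real.rpow_mul h1.le]
      norm_num
    have e3 : |((1-x)^2)⁻¹| = (1-x) ^ (-2:ℝ) := by
      rw [abs_of_pos (by positivity), Real.rpow_neg h1.le, Real.rpow_two]
    rw [smul_eq_mul, e1, e2, e3]
    have : (1-x)^(-2:ℝ) * (x^(a-1) * (1-x)^(-(a-1)) * (1-x)^(a+b))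
        = x^(a-1) * ((1-x)^(-2:ℝ) * (1-x)^(-(a-1)) * (1-x)^(a+b)) := by ring
    rw [this, ← Real.rpow_add h1, ← Real.rpow_add h1,
      show (-2:ℝ) + -(a-1) + (a+b) = b-1 by ring]
  rw [setIntegral_congr_fun measurableSet_Ioo heq, ← integral_Ioc_eq_integral_Ioo,
    ← intervalIntegral.integral_of_le zero_le_one]
  exact realBeta a b ha hb

open Real Set in
lemma oneDimInt (d : ℕ) (hd : 1 ≤ d) (c p : ℝ) (hc : 0 < c) (hp : (d:ℝ)/2 < p) :
    ∫ r in Ioi (0:ℝ), r ^ (d-1 : ℕ) * (c^2 + r^2) ^ (-p)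
      = c ^ ((d:ℝ) - 2*p)
        * (Real.Gamma (d/2) * Real.Gamma (p - d/2) / (2 * Real.Gamma p)) := by
  have hd2 : (0:ℝ) < (d:ℝ)/2 := by positivity
  have step1 : ∫ r in Ioi (0:ℝ), r ^ (d-1 : ℕ) * (c^2 + r^2) ^ (-p)
      = c ^ ((d:ℝ) - 2*p) * ∫ x in Ioi (0:ℝ), x ^ (d-1:ℕ) * (1 + x^2) ^ (-p) := by
    have h := integral_comp_mul_left_Ioi
      (fun r => r ^ (d-1 : ℕ) * (c^2 + r^2) ^ (-p)) 0 hc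
    rw [mul_zero] at h
    simp only [smul_eq_mul] at h
    have congr1 : ∀ x ∈ Ioi (0:ℝ),
        (c*x) ^ (d-1 : ℕ) * (c^2 + (c*x)^2) ^ (-p)
          = (c ^ (d-1:ℕ) * c ^ (-2*p)) * (x ^ (d-1:ℕ) * (1 + x^2) ^ (-p)) := by
      intro x hx
      have hx0 := mem_Ioi.mp hx
      have e1 : c^2 + (c*x)^2 = c^2 * (1 + x^2) := by ring
      rw [e1, Real.mul_rpow (by positivity) (by positivity), mul_pow]
      have e2 : (c^2 : ℝ) ^ (-p) = c ^ (-2*p) := by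
        rw [← Real.rpow_natCast c 2, ← Real.rpow_mul hc.le]
        norm_num
      rw [e2]; ring
    rw [setIntegral_congr_fun measurableSet_Ioi congr1, integral_const_mul] at h
    have hc3 : c * (c ^ (d-1:ℕ) * c ^ (-2*p)) = c ^ ((d:ℝ) - 2*p) := by
      rw [← Real.rpow_natCast c (d-1), ← Real.rpow_add hc]
      nth_rewrite 1 [← Real.rpow_one c]
      rw [← Real.rpow_add hc]
      congr 1
      push_cast [Nat.cast_sub hd]
      ring
    calc ∫ r in Ioi (0:ℝ), r ^ (d-1 : ℕ) * (c^2 + r^2) ^ (-p)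
        = c * (c⁻¹ * ∫ r in Ioi (0:ℝ), r ^ (d-1 : ℕ) * (c^2 + r^2) ^ (-p)) := by
          rw [← mul_assoc, mul_inv_cancel₀ hc.ne', one_mul]
      _ = c * ((c ^ (d-1:ℕ) * c ^ (-2*p)) * ∫ x in Ioi (0:ℝ), x ^ (d-1:ℕ) * (1 + x^2) ^ (-p)) := by
          rw [← h]
      _ = _ := by rw [← mul_assoc, hc3]
  have step2 : ∫ x in Ioi (0:ℝ), x ^ (d-1:ℕ) * (1 + x^2) ^ (-p)
      = Real.Gamma (d/2) * Real.Gamma (p - d/2) / (2 * Real.Gamma p) := by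
    have h := integral_comp_rpow_Ioi_of_pos
      (g := fun t => (1/2 : ℝ) * (t ^ ((d:ℝ)/2 - 1) * (1+t) ^ (-p))) (p := 2) two_pos
    have congr2 : ∀ x ∈ Ioi (0:ℝ),
        ((2:ℝ) * x ^ ((2:ℝ) - 1)) • ((1/2 : ℝ) * ((x ^ (2:ℝ)) ^ ((d:ℝ)/2 - 1) * (1 + x ^ (2:ℝ)) ^ (-p)))
          = x ^ (d-1:ℕ) * (1 + x^2) ^ (-p) := by
      intro x hx
      have hx0 := mem_Ioi.mp hx
      have e0 : x ^ (2:ℝ) = x ^ (2:ℕ) := by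
        rw [← Real.rpow_natCast x 2]; norm_num
      have e1 : (x ^ (2:ℝ)) ^ ((d:ℝ)/2 - 1) = x ^ ((d:ℝ) - 2) := by
        rw [← Real.rpow_mul hx0.le]
        congr 1
        ring
      have e2 : x ^ ((2:ℝ)-1) = x := by
        norm_num
      rw [smul_eq_mul, e1, e2, e0]
      have e3 : x ^ ((d:ℝ) - 2) = x ^ (d-1:ℕ) * x⁻¹ := by
        rw [← Real.rpow_natCast x (d-1), ← Real.rpow_neg_one x, ← Real.rpow_add hx0]
        congr 1
        push_cast [Nat.cast_sub hd]
        ring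
      rw [e3]
      field_simp
    rw [setIntegral_congr_fun measurableSet_Ioi congr2] at h
    rw [h, integral_const_mul]
    have hbeta := IoiBeta ((d:ℝ)/2) (p - (d:ℝ)/2) hd2 (by linarith)
    rw [show (d:ℝ)/2 + (p - (d:ℝ)/2) = p by ring] at hbeta
    rw [hbeta]
    ring
  rw [step1, step2]

/-- `∫_{ℝ^d} W_p^p` where `W_p(x) = pμ/(μ² + |x|²)` and `μ = (p − 1 − δ)/2`. -/
noncomputable def WpIntegral (d : ℕ) (δ p : ℝ) : ℝ :=
  ∫ x : EuclideanSpace ℝ (Fin d),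
    (p * ((p - 1 - δ) / 2) / (((p - 1 - δ) / 2) ^ 2 + ‖x‖ ^ 2)) ^ p

open Real Set in
lemma fullInt (d : ℕ) (hd : 1 ≤ d) (c p : ℝ) (hc : 0 < c) (hp : (d:ℝ)/2 < p) :
    ∫ x : EuclideanSpace ℝ (Fin d), (c^2 + ‖x‖^2) ^ (-p)
      = Real.pi ^ ((d:ℝ)/2) * c ^ ((d:ℝ) - 2*p)
        * (Real.Gamma (p - d/2) / Real.Gamma p) := by
  haveI : Nonempty (Fin d) := ⟨⟨0, hd⟩⟩
  haveI : Nontrivial (EuclideanSpace ℝ (Fin d)) := inferInstance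
  have hpolar := integral_fun_norm_addHaar
    (volume : Measure (EuclideanSpace ℝ (Fin d)))
    (fun r : ℝ => (c^2 + r^2) ^ (-p))
  have hdim : Module.finrank ℝ (EuclideanSpace ℝ (Fin d)) = d := by
    simp [finrank_euclideanSpace]
  rw [hdim] at hpolar
  have hball : (volume (Metric.ball (0 : EuclideanSpace ℝ (Fin d)) 1)).toReal
      = Real.sqrt π ^ d / Real.Gamma (d/2 + 1) := by
    rw [EuclideanSpace.volume_ball]
    simp [Fintype.card_fin, ENNReal.toReal_ofReal
      (by positivity : (0:ℝ) ≤ Real.sqrt π ^ d / Real.Gamma ((d:ℝ)/2 + 1))]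
  rw [hpolar, measureReal_def, hball, nsmul_eq_mul, smul_eq_mul]
  have hint : (∫ y in Ioi (0:ℝ), y ^ (d-1 : ℕ) • ((c^2 + y^2) ^ (-p)))
      = c ^ ((d:ℝ) - 2*p)
        * (Real.Gamma (d/2) * Real.Gamma (p - d/2) / (2 * Real.Gamma p)) := by
    simp only [smul_eq_mul]
    exact oneDimInt d hd c p hc hp
  rw [hint]
  have hsq : Real.sqrt π ^ d = π ^ ((d:ℝ)/2) := by
    rw [Real.sqrt_eq_rpow, ← Real.rpow_natCast (π ^ ((1:ℝ)/2)) d, ← Real.rpow_mul pi_pos.le]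
    congr 1
    ring
  have hd0 : (0:ℝ) < d := by exact_mod_cast hd
  have hGd : Real.Gamma ((d:ℝ)/2 + 1) = ((d:ℝ)/2) * Real.Gamma ((d:ℝ)/2) := by
    rw [Real.Gamma_add_one (by positivity : ((d:ℝ)/2) ≠ 0)]
  rw [hsq, hGd]
  have h1 : Real.Gamma ((d:ℝ)/2) ≠ 0 := (Real.Gamma_pos_of_pos (by linarith)).ne'
  have h2 : Real.Gamma p ≠ 0 := (Real.Gamma_pos_of_pos (by linarith)).ne'
  have h3 : ((d:ℝ)) ≠ 0 := hd0.ne'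
  field_simp

open Real Set in
lemma WpIntegral_formula (d : ℕ) (hd : 1 ≤ d) (δ p : ℝ) (hδ : 0 ≤ δ)
    (h1 : δ < p - 1) (h2 : (d:ℝ)/2 < p) :
    WpIntegral d δ p
      = p ^ p * Real.pi ^ ((d : ℝ) / 2) * (2 / (p - 1 - δ)) ^ (p - d)
        * (Real.Gamma (p - d / 2) / Real.Gamma p) := by
  have hd0 : (0:ℝ) < d := by exact_mod_cast hd
  have hp0 : 0 < p := by linarith
  set c : ℝ := (p - 1 - δ) / 2 with hcdef
  have hc : 0 < c := by rw [hcdef]; linarith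
  have hpt : ∀ x : EuclideanSpace ℝ (Fin d),
      (p * c / (c^2 + ‖x‖^2)) ^ p = (p*c) ^ p * ((c^2 + ‖x‖^2) ^ (-p)) := by
    intro x
    have hB : (0:ℝ) < c^2 + ‖x‖^2 := by positivity
    rw [Real.div_rpow (by positivity) hB.le, Real.rpow_neg hB.le, div_eq_mul_inv]
  have : WpIntegral d δ p = ∫ x : EuclideanSpace ℝ (Fin d),
      (p*c) ^ p * ((c^2 + ‖x‖^2) ^ (-p)) := by
    rw [WpIntegral]
    exact integral_congr_ae (Eventually.of_forall hpt)
  rw [this, integral_const_mul, fullInt d hd c p hc h2]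
  have e1 : (p*c) ^ p = p ^ p * c ^ p := Real.mul_rpow hp0.le hc.le
  have e2 : (2 / (p - 1 - δ)) ^ (p - (d:ℝ)) = c ^ ((d:ℝ) - p) := by
    have : 2 / (p - 1 - δ) = c⁻¹ := by rw [hcdef, inv_div]
    rw [this, ← Real.rpow_neg_one c, ← Real.rpow_mul hc.le]
    congr 1
    ring
  have e3 : c ^ p * c ^ ((d:ℝ) - 2*p) = c ^ ((d:ℝ) - p) := by
    rw [← Real.rpow_add hc]
    congr 1
    ring
  rw [e1, e2]
  rw [show p ^ p * c ^ p * (π ^ ((d:ℝ)/2) * c ^ ((d:ℝ) - 2*p)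
      * (Real.Gamma (p - d/2) / Real.Gamma p))
    = p ^ p * π ^ ((d:ℝ)/2) * (c ^ p * c ^ ((d:ℝ) - 2*p))
      * (Real.Gamma (p - d/2) / Real.Gamma p) by ring, e3]

open Real Set in
lemma Wp_limit (d : ℕ) (hd : 1 ≤ d) :
    Tendsto (fun p : ℝ => (WpIntegral d ((d : ℝ) - 1) p) ^ (1 / p))
      (nhdsWithin (d : ℝ) (Set.Ioi (d : ℝ)))
      (nhds ((d : ℝ) * Real.sqrt Real.pi
        * (Real.Gamma (d / 2) / Real.Gamma d) ^ (1 / (d : ℝ)))) := by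
  have hd0 : (0:ℝ) < d := by exact_mod_cast hd
  have hd1 : (1:ℝ) ≤ d := by exact_mod_cast hd
  have hGd2 : 0 < Real.Gamma ((d:ℝ)/2) := Real.Gamma_pos_of_pos (by positivity)
  have hGd : 0 < Real.Gamma (d:ℝ) := Real.Gamma_pos_of_pos hd0
  set G : ℝ → ℝ := fun p => p * (Real.pi ^ ((d:ℝ)/2)) ^ (1/p)
      * Real.exp ((p - (d:ℝ)) * Real.log (2/(p - (d:ℝ))) * (1/p))
      * (Real.Gamma (p - (d:ℝ)/2) / Real.Gamma p) ^ (1/p) with hG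
  -- eventual equality
  have hev : (fun p : ℝ => (WpIntegral d ((d : ℝ) - 1) p) ^ (1 / p))
      =ᶠ[nhdsWithin (d : ℝ) (Set.Ioi (d : ℝ))] G := by
    filter_upwards [self_mem_nhdsWithin] with p hp
    have hpd : (d:ℝ) < p := hp
    have hp0 : (0:ℝ) < p := by linarith
    have hb : (0:ℝ) < 2/(p - (d:ℝ)) := by
      apply div_pos two_pos; linarith
    have hGr : (0:ℝ) < Real.Gamma (p - (d:ℝ)/2) / Real.Gamma p :=
      div_pos (Real.Gamma_pos_of_pos (by linarith)) (Real.Gamma_pos_of_pos hp0)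
    rw [WpIntegral_formula d hd ((d:ℝ)-1) p (by linarith) (by linarith) (by linarith)]
    rw [show p - 1 - ((d:ℝ)-1) = p - d by ring]
    rw [Real.mul_rpow (by positivity) hGr.le,
      Real.mul_rpow (by positivity) (Real.rpow_nonneg hb.le _),
      Real.mul_rpow (Real.rpow_nonneg hp0.le _) (Real.rpow_nonneg pi_pos.le _)]
    have e1 : (p ^ p) ^ (1/p) = p := by
      rw [← Real.rpow_mul hp0.le, mul_one_div, div_self hp0.ne', Real.rpow_one]
    have e2 : ((2/(p - (d:ℝ))) ^ (p - (d:ℝ))) ^ (1/p)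
        = Real.exp ((p - (d:ℝ)) * Real.log (2/(p - (d:ℝ))) * (1/p)) := by
      rw [Real.rpow_def_of_pos hb, Real.rpow_def_of_pos (Real.exp_pos _), Real.log_exp]
      ring_nf
    rw [e1, e2, hG]
  rw [tendsto_congr' hev]
  -- limits of the four factors
  have hA : Tendsto (fun p : ℝ => p) (nhdsWithin (d:ℝ) (Set.Ioi (d:ℝ))) (nhds (d:ℝ)) :=
    tendsto_id.mono_left nhdsWithin_le_nhds
  have hinv : Tendsto (fun p : ℝ => 1/p) (nhdsWithin (d:ℝ) (Set.Ioi (d:ℝ)))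
      (nhds (1/(d:ℝ))) := by
    exact (continuousAt_const.div continuousAt_id hd0.ne').tendsto.mono_left nhdsWithin_le_nhds
  have hB : Tendsto (fun p : ℝ => (Real.pi ^ ((d:ℝ)/2)) ^ (1/p))
      (nhdsWithin (d:ℝ) (Set.Ioi (d:ℝ))) (nhds (Real.sqrt Real.pi)) := by
    have hC0 : (Real.pi ^ ((d:ℝ)/2)) ≠ 0 := by positivity
    have := (Real.continuousAt_const_rpow (b := 1/(d:ℝ)) hC0).tendsto.comp hinv
    convert this using 2
    · rfl
    rw [← Real.rpow_mul pi_pos.le, Real.sqrt_eq_rpow]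
    congr 1
    field_simp
  have hsub : Tendsto (fun p : ℝ => p - (d:ℝ)) (nhdsWithin (d:ℝ) (Set.Ioi (d:ℝ)))
      (nhdsWithin 0 (Set.Ioi (0:ℝ))) := by
    rw [tendsto_nhdsWithin_iff]
    constructor
    · have : Tendsto (fun p : ℝ => p - (d:ℝ)) (nhds (d:ℝ)) (nhds ((d:ℝ) - d)) :=
        (continuousAt_id.sub continuousAt_const).tendsto
      rw [sub_self] at this
      exact this.mono_left nhdsWithin_le_nhds
    · filter_upwards [self_mem_nhdsWithin] with p hp
      simp only [Set.mem_Ioi] at hp ⊢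
      linarith
  have hC : Tendsto (fun p : ℝ => Real.exp ((p - (d:ℝ)) * Real.log (2/(p - (d:ℝ))) * (1/p)))
      (nhdsWithin (d:ℝ) (Set.Ioi (d:ℝ))) (nhds 1) := by
    have hlog : Tendsto (fun t : ℝ => t * Real.log (2/t)) (nhdsWithin 0 (Set.Ioi (0:ℝ)))
        (nhds 0) := by
      have h1 : Tendsto (fun t : ℝ => t * Real.log 2) (nhdsWithin 0 (Set.Ioi (0:ℝ)))
          (nhds 0) := by
        have : Tendsto (fun t : ℝ => t * Real.log 2) (nhds 0) (nhds (0 * Real.log 2)) :=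
          (continuousAt_id.mul continuousAt_const).tendsto
        rw [zero_mul] at this
        exact this.mono_left nhdsWithin_le_nhds
      have h2 : Tendsto (fun t : ℝ => Real.log t * t) (nhdsWithin 0 (Set.Ioi (0:ℝ)))
          (nhds 0) := by
        have := tendsto_log_mul_rpow_nhdsGT_zero (r := 1) one_pos
        simpa [Real.rpow_one] using this
      have := h1.sub h2
      rw [sub_zero] at this
      apply this.congr'
      filter_upwards [self_mem_nhdsWithin] with t ht
      have ht0 : (0:ℝ) < t := ht
      rw [Real.log_div two_ne_zero ht0.ne']
      ring
    have hinner : Tendsto (fun p : ℝ => (p - (d:ℝ)) * Real.log (2/(p - (d:ℝ))) * (1/p))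
        (nhdsWithin (d:ℝ) (Set.Ioi (d:ℝ))) (nhds 0) := by
      have := (hlog.comp hsub).mul hinv
      rw [zero_mul] at this
      exact this
    have := (Real.continuous_exp.continuousAt (x := 0)).tendsto.comp hinner
    simpa [Function.comp_def] using this
  have hGam : ContinuousAt Real.Gamma ((d:ℝ)/2) := by
    apply (Real.differentiableAt_Gamma ?_).continuousAt
    intro m
    have : (0:ℝ) < (d:ℝ)/2 := by positivity
    have hm : -(m:ℝ) ≤ 0 := neg_nonpos.mpr (Nat.cast_nonneg m)
    linarith
  have hGam2 : ContinuousAt Real.Gamma (d:ℝ) := by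
    apply (Real.differentiableAt_Gamma ?_).continuousAt
    intro m
    have hm : -(m:ℝ) ≤ 0 := neg_nonpos.mpr (Nat.cast_nonneg m)
    linarith
  have hD : Tendsto (fun p : ℝ => (Real.Gamma (p - (d:ℝ)/2) / Real.Gamma p) ^ (1/p))
      (nhdsWithin (d:ℝ) (Set.Ioi (d:ℝ)))
      (nhds ((Real.Gamma ((d:ℝ)/2) / Real.Gamma (d:ℝ)) ^ (1/(d:ℝ)))) := by
    have hnum : Tendsto (fun p : ℝ => Real.Gamma (p - (d:ℝ)/2)) (nhds (d:ℝ))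
        (nhds (Real.Gamma ((d:ℝ)/2))) := by
      have hsub2 : Tendsto (fun p : ℝ => p - (d:ℝ)/2) (nhds (d:ℝ)) (nhds ((d:ℝ) - d/2)) :=
        (continuousAt_id.sub continuousAt_const).tendsto
      rw [show (d:ℝ) - d/2 = (d:ℝ)/2 by ring] at hsub2
      exact hGam.tendsto.comp hsub2
    have hGam' : ContinuousAt Real.Gamma ((d:ℝ) - d/2) := by
      rw [show (d:ℝ) - d/2 = (d:ℝ)/2 by ring]; exact hGam
    have hratio : ContinuousAt (fun p : ℝ => Real.Gamma (p - (d:ℝ)/2) / Real.Gamma p) (d:ℝ) := by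
      apply ContinuousAt.div
      · exact ContinuousAt.comp (g := Real.Gamma) (f := fun p : ℝ => p - (d:ℝ)/2)
          (x := (d:ℝ)) hGam' (continuousAt_id.sub continuousAt_const)
      · exact hGam2
      · exact hGd.ne'
    have : ContinuousAt (fun p : ℝ => (Real.Gamma (p - (d:ℝ)/2) / Real.Gamma p) ^ (1/p))
        (d:ℝ) := by
      apply ContinuousAt.rpow hratio
      · exact continuousAt_const.div continuousAt_id hd0.ne'
      · left
        rw [show (d:ℝ) - d/2 = (d:ℝ)/2 by ring]
        exact (div_pos hGd2 hGd).ne'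
    have h5 := this.tendsto.mono_left (nhdsWithin_le_nhds (s := Set.Ioi (d:ℝ)))
    rw [show (d:ℝ) - d/2 = (d:ℝ)/2 by ring] at h5
    exact h5
  have := ((hA.mul hB).mul hC).mul hD
  rw [mul_one] at this
  exact this

/-- **The `L^p(ℝ^d)` norm of the explicit radial potential `W_p`.** For
`0 ≤ δ < p − 1` and `p > d/2`,
`∫_{ℝ^d} W_p^p = p^p π^{d/2} (2/(p−1−δ))^{p−d} Γ(p−d/2)/Γ(p)`; in particular
with `δ = d − 1`, `(∫ W_p^p)^{1/p} → d √π (Γ(d/2)/Γ(d))^{1/d}` as `p → d⁺`. -/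
theorem WpIntegral_eq_and_limit (d : ℕ) (hd : 1 ≤ d) :
    (∀ δ p : ℝ, 0 ≤ δ → δ < p - 1 → (d : ℝ) / 2 < p →
      WpIntegral d δ p
        = p ^ p * Real.pi ^ ((d : ℝ) / 2) * (2 / (p - 1 - δ)) ^ (p - d)
          * (Real.Gamma (p - d / 2) / Real.Gamma p)) ∧
    Tendsto (fun p : ℝ => (WpIntegral d ((d : ℝ) - 1) p) ^ (1 / p))
      (nhdsWithin (d : ℝ) (Set.Ioi (d : ℝ)))
      (nhds ((d : ℝ) * Real.sqrt Real.pi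
        * (Real.Gamma (d / 2) / Real.Gamma d) ^ (1 / (d : ℝ)))) := by
  exact ⟨fun δ p hδ h1 h2 => WpIntegral_formula d hd δ p hδ h1 h2, Wp_limit d hd⟩
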